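/- Let J be a k×p real matrix with JJᵀ = I_k, μ ∈ ℝ^p, Σ symmetric positive definite, and suppose Jμ ≠ 0. Fix r ≥ 0, R > 0. Then w* = c Jᵀ(JΣJᵀ)⁻¹Jμ with c = R/√(μᵀJᵀ(JΣJᵀ)⁻¹Jμ) maximizes (wᵀμ - r)/√(wᵀΣw) over all nonzero w of the form w = Jᵀx (x ∈ ℝ^k) with wᵀΣw ≤ R². -/

import Mathlib

open Matrix

lemma dot_symm {n : ℕ} {B : Matrix (Fin n) (Fin n) ℝ} (hBt : Bᵀ = B)
    (a b : Fin n → ℝ) : a ⬝ᵥ B *ᵥ b = b ⬝ᵥ B *ᵥ a := by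
  rw [Matrix.dotProduct_mulVec, ← hBt, Matrix.vecMul_transpose, hBt,
    dotProduct_comm]

lemma cs_aux {n : ℕ} {B : Matrix (Fin n) (Fin n) ℝ} (hB : B.PosSemidef)
    (u v : Fin n → ℝ) :
    (u ⬝ᵥ B *ᵥ v) ^ 2 ≤ (u ⬝ᵥ B *ᵥ u) * (v ⬝ᵥ B *ᵥ v) := by
  have hBt : Bᵀ = B := by
    rw [← Matrix.conjTranspose_eq_transpose_of_trivial]; exact hB.isHermitian
  have h : ∀ t : ℝ, 0 ≤ (v ⬝ᵥ B *ᵥ v) * (t * t) + (2 * (u ⬝ᵥ B *ᵥ v)) * t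
      + (u ⬝ᵥ B *ᵥ u) := by
    intro t
    have h0 := hB.dotProduct_mulVec_nonneg (u + t • v)
    simp only [star_trivial] at h0
    have hexp : (u + t • v) ⬝ᵥ B *ᵥ (u + t • v)
        = (v ⬝ᵥ B *ᵥ v) * (t * t) + (2 * (u ⬝ᵥ B *ᵥ v)) * t + (u ⬝ᵥ B *ᵥ u) := by
      simp only [Matrix.mulVec_add, Matrix.mulVec_smul, add_dotProduct,
        dotProduct_add, smul_dotProduct, dotProduct_smul,
        smul_eq_mul]
      rw [dot_symm hBt v u]; ring
    rw [hexp] at h0; exact h0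
  have hd := discrim_le_zero h
  rw [discrim] at hd
  nlinarith [hd]

lemma conj_dot {p k : ℕ} (S : Matrix (Fin p) (Fin p) ℝ) (J : Matrix (Fin k) (Fin p) ℝ)
    (x : Fin k → ℝ) :
    (Jᵀ *ᵥ x) ⬝ᵥ S *ᵥ (Jᵀ *ᵥ x) = x ⬝ᵥ (J * S * Jᵀ) *ᵥ x := by
  rw [Matrix.mulVec_mulVec, Matrix.dotProduct_mulVec, Matrix.mulVec_transpose,
    Matrix.vecMul_vecMul, Matrix.mul_assoc, Matrix.dotProduct_mulVec]

lemma proj_dot {p k : ℕ} (μ : Fin p → ℝ) (J : Matrix (Fin k) (Fin p) ℝ)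
    (x : Fin k → ℝ) : (Jᵀ *ᵥ x) ⬝ᵥ μ = x ⬝ᵥ (J *ᵥ μ) := by
  rw [Matrix.mulVec_transpose, ← Matrix.dotProduct_mulVec]

theorem subspace_sharpe_optimal_portfolio {p k : ℕ} (μ : Fin p → ℝ)
    (S : Matrix (Fin p) (Fin p) ℝ) (hS : S.PosDef)
    (J : Matrix (Fin k) (Fin p) ℝ) (hJ : J * Jᵀ = 1)
    (hJμ : J *ᵥ μ ≠ 0)
    (r R : ℝ) (hr : 0 ≤ r) (hR : 0 < R)
    (wstar : Fin p → ℝ)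
    (hwstar : wstar =
      (R / Real.sqrt (μ ⬝ᵥ (Jᵀ * (J * S * Jᵀ)⁻¹ * J) *ᵥ μ)) •
        ((Jᵀ * (J * S * Jᵀ)⁻¹ * J) *ᵥ μ)) :
    (∃ x : Fin k → ℝ, wstar = Jᵀ *ᵥ x) ∧
    wstar ⬝ᵥ S *ᵥ wstar ≤ R ^ 2 ∧
    ∀ w : Fin p → ℝ, w ≠ 0 → (∃ x : Fin k → ℝ, w = Jᵀ *ᵥ x) →
      w ⬝ᵥ S *ᵥ w ≤ R ^ 2 →
      (w ⬝ᵥ μ - r) / Real.sqrt (w ⬝ᵥ S *ᵥ w) ≤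
        (wstar ⬝ᵥ μ - r) / Real.sqrt (wstar ⬝ᵥ S *ᵥ wstar) := by
  set A := J * S * Jᵀ with hAdef
  -- A is positive definite
  have hJT : ∀ x : Fin k → ℝ, x ≠ 0 → Jᵀ *ᵥ x ≠ 0 := by
    intro x hx h
    apply hx
    have h2 := congrArg (fun v => J *ᵥ v) h
    simpa [Matrix.mulVec_mulVec, hJ] using h2
  have hA : A.PosDef := by
    apply Matrix.PosDef.of_dotProduct_mulVec_pos
    · rw [Matrix.IsHermitian, Matrix.conjTranspose_eq_transpose_of_trivial, hAdef,
        Matrix.transpose_mul, Matrix.transpose_mul, Matrix.transpose_transpose]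
      have hSt : Sᵀ = S := by
        rw [← Matrix.conjTranspose_eq_transpose_of_trivial]; exact hS.isHermitian
      rw [hSt, Matrix.mul_assoc]
    · intro x hx
      rw [star_trivial, ← conj_dot]
      have h := hS.dotProduct_mulVec_pos (hJT x hx)
      rw [star_trivial] at h; exact h
  have hAinv : A⁻¹.PosDef := hA.inv
  have hAA : A * A⁻¹ = 1 := Matrix.mul_nonsing_inv A (isUnit_iff_ne_zero.mpr hA.det_pos.ne')
  set m : Fin k → ℝ := J *ᵥ μ with hmdef
  set q : ℝ := m ⬝ᵥ A⁻¹ *ᵥ m with hqdef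
  have hq : 0 < q := by
    have := hAinv.dotProduct_mulVec_pos hJμ
    simpa using this
  have hsq : Real.sqrt q > 0 := Real.sqrt_pos.mpr hq
  have hqq : Real.sqrt q * Real.sqrt q = q := Real.mul_self_sqrt hq.le
  -- rewrite the defining expression
  have hexpr : (Jᵀ * A⁻¹ * J) *ᵥ μ = Jᵀ *ᵥ (A⁻¹ *ᵥ m) := by
    rw [Matrix.mul_assoc, ← Matrix.mulVec_mulVec, ← Matrix.mulVec_mulVec]
  have hqe : μ ⬝ᵥ (Jᵀ * A⁻¹ * J) *ᵥ μ = q := by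
    rw [hexpr, dotProduct_comm, proj_dot, dotProduct_comm, hqdef]
  set c : ℝ := R / Real.sqrt q with hcdef
  have hc : 0 < c := div_pos hR hsq
  have hwstar' : wstar = Jᵀ *ᵥ (c • (A⁻¹ *ᵥ m)) := by
    rw [hwstar, hqe, hexpr, Matrix.mulVec_smul]
  have hAm : A *ᵥ (A⁻¹ *ᵥ m) = m := by
    rw [Matrix.mulVec_mulVec, hAA, Matrix.one_mulVec]
  -- value of wstar Σ wstar
  have hwSw : wstar ⬝ᵥ S *ᵥ wstar = R ^ 2 := by
    rw [hwstar', conj_dot, ← hAdef, Matrix.mulVec_smul, dotProduct_smul,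
      smul_dotProduct, hAm, dotProduct_comm (A⁻¹ *ᵥ m) m,
      ← hqdef, smul_eq_mul, smul_eq_mul, hcdef]
    field_simp
    rw [Real.sq_sqrt hq.le]
  have hwμ : wstar ⬝ᵥ μ = R * Real.sqrt q := by
    rw [hwstar', proj_dot, ← hmdef, smul_dotProduct, smul_eq_mul,
      dotProduct_comm, ← hqdef, hcdef]
    field_simp
    rw [Real.sq_sqrt hq.le]
  refine ⟨⟨c • (A⁻¹ *ᵥ m), hwstar'⟩, le_of_eq hwSw, ?_⟩
  rintro w hw ⟨x, rfl⟩ hbound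
  have hx0 : x ≠ 0 := by rintro rfl; simp at hw
  have hs2 : (Jᵀ *ᵥ x) ⬝ᵥ S *ᵥ (Jᵀ *ᵥ x) = x ⬝ᵥ A *ᵥ x := conj_dot S J x
  have hs2pos : 0 < x ⬝ᵥ A *ᵥ x := by simpa using hA.dotProduct_mulVec_pos hx0
  set s : ℝ := Real.sqrt (x ⬝ᵥ A *ᵥ x) with hsdef
  have hspos : 0 < s := Real.sqrt_pos.mpr hs2pos
  have hss : s * s = x ⬝ᵥ A *ᵥ x := Real.mul_self_sqrt hs2pos.le
  have hsR : s ≤ R := by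
    rw [hsdef]
    calc Real.sqrt (x ⬝ᵥ A *ᵥ x) ≤ Real.sqrt (R ^ 2) :=
          Real.sqrt_le_sqrt (by rw [← hs2]; exact hbound)
      _ = R := by rw [Real.sqrt_sq hR.le]
  -- Cauchy-Schwarz
  have hcs : (x ⬝ᵥ m) ^ 2 ≤ (x ⬝ᵥ A *ᵥ x) * q := by
    have h := cs_aux hA.posSemidef x (A⁻¹ *ᵥ m)
    rw [hAm] at h
    have h2 : (A⁻¹ *ᵥ m) ⬝ᵥ m = q := by rw [dotProduct_comm, hqdef]
    rw [h2] at h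
    exact h
  have hxm : x ⬝ᵥ m ≤ s * Real.sqrt q := by
    have h1 : x ⬝ᵥ m ≤ Real.sqrt ((x ⬝ᵥ m) ^ 2) := by
      rw [Real.sqrt_sq_eq_abs]; exact le_abs_self _
    calc x ⬝ᵥ m ≤ Real.sqrt ((x ⬝ᵥ m) ^ 2) := h1
      _ ≤ Real.sqrt ((x ⬝ᵥ A *ᵥ x) * q) := Real.sqrt_le_sqrt hcs
      _ = s * Real.sqrt q := by rw [Real.sqrt_mul hs2pos.le]
  -- put everything together
  rw [hwSw, hwμ, hs2, ← hsdef, Real.sqrt_sq hR.le, proj_dot, ← hmdef]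
  have step1 : (x ⬝ᵥ m - r) / s ≤ Real.sqrt q - r / s := by
    rw [div_le_iff₀ hspos, sub_mul, div_mul_cancel₀ _ hspos.ne']
    have : Real.sqrt q * s = s * Real.sqrt q := mul_comm _ _
    linarith [hxm]
  have step2 : Real.sqrt q - r / s ≤ Real.sqrt q - r / R :=
    sub_le_sub_left (div_le_div_of_nonneg_left hr hspos hsR) _
  have step3 : Real.sqrt q - r / R = (R * Real.sqrt q - r) / R := by
    field_simp
  linarith [step1, step2, step3.le, step3.ge]
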